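/- Let 𝒦 be a compact subset of the cone of linear forms on ℝ^m with nonnegative canonical coordinates, and let q ∈ [1, ∞]. There exists a constant C ≥ 0, depending only on 𝒦 and q, such that for every κ ∈ L¹(ℝ) ∩ L^∞(ℝ), every pair of finite abstract simplicial complexes K and K', and every pair of non-decreasing maps f : K → ℝ^m and g : K' → ℝ^m, one has ‖HT_f^κ − HT_g^κ‖_{L^q(𝒦)} ≤ C · ‖κ‖_∞ · d(ECP_f, ECP_g), as an inequality in [0, +∞]. -/

import Mathlib

open MeasureTheory
open scoped Classical ENNReal NNReal

/-- A finite abstract simplicial complex on a vertex set `V`. -/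
structure SimplicialCplx (V : Type*) where
  faces : Finset (Finset V)
  nonempty_faces : ∀ σ ∈ faces, σ.Nonempty
  down_closed : ∀ σ ∈ faces, ∀ τ, τ ⊆ σ → τ.Nonempty → τ ∈ faces

/-- Indicator of the upper set `Q_u = {t | u ≤ t}` (coordinatewise order on `ℝ^m`). -/
noncomputable def indQ {m : ℕ} (u t : Fin m → ℝ) : ℤ := if u ≤ t then 1 else 0

/-- `(P, N)` is a decomposition of `φ : ℝ^m → ℤ`. -/
def IsDecomp {m : ℕ} (φ : (Fin m → ℝ) → ℤ) (P N : Multiset (Fin m → ℝ)) : Prop :=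
  ∀ t, φ t = (P.map fun u => indQ u t).sum - (N.map fun u => indQ u t).sum

/-- The ℓ¹ distance on `ℝ^m`. -/
noncomputable def l1 {m : ℕ} (u v : Fin m → ℝ) : ℝ := ∑ i, |u i - v i|

/-- The signed 1-Wasserstein distance between finitely presented functions on `ℝ^m`. -/
noncomputable def signedW1Dist {m : ℕ} (φ φ' : (Fin m → ℝ) → ℤ) : ℝ≥0∞ :=
  sInf { c : ℝ≥0∞ | ∃ (P N P' N' : Multiset (Fin m → ℝ))
      (pr : Multiset ((Fin m → ℝ) × (Fin m → ℝ))),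
      IsDecomp φ P N ∧ IsDecomp φ' P' N' ∧
      pr.map Prod.fst = P + N' ∧ pr.map Prod.snd = N + P' ∧
      c = ENNReal.ofReal ((pr.map fun uv => l1 uv.1 uv.2).sum) }

/-- The Euler characteristic profile of a non-decreasing filter `f : K → ℝ^m`. -/
noncomputable def ECP {V : Type*} {m : ℕ} (K : SimplicialCplx V)
    (f : Finset V → (Fin m → ℝ)) : (Fin m → ℝ) → ℤ :=
  fun t => ∑ σ ∈ K.faces.filter (fun σ => f σ ≤ t), (-1 : ℤ) ^ (σ.card - 1)

/-- The hybrid transform with kernel `κ` of a non-decreasing filter `f : K → ℝ^m`,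
evaluated at a linear form `ξ` (given by its coordinate vector):
`HT_f^κ(ξ) = ∫_ℝ κ(s) ⬝ (Σ_{σ ∈ K, ξ(f σ) ≤ s} (−1)^{dim σ}) ds`. -/
noncomputable def HT {V : Type*} {m : ℕ} (K : SimplicialCplx V)
    (f : Finset V → (Fin m → ℝ)) (κ : ℝ → ℝ) (ξ : Fin m → ℝ) : ℝ :=
  ∫ s, κ s * ((∑ σ ∈ K.faces.filter (fun σ => (∑ i, ξ i * f σ i) ≤ s),
      (-1 : ℤ) ^ (σ.card - 1) : ℤ) : ℝ)



lemma sum_map_ite_eq {α : Type*} [DecidableEq α] (u : α) (Q : Multiset α) :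
    (Q.map fun v => if v = u then (1:ℤ) else 0).sum = Q.count u := by
  induction Q using Multiset.induction with
  | empty => simp
  | cons a Q ih =>
    simp only [Multiset.map_cons, Multiset.sum_cons, ih, Multiset.count_cons]
    by_cases h : a = u
    · simp [h, add_comm]
    · simp [h, Ne.symm h]

lemma multiset_cancel {m : ℕ} (Q : Multiset (Fin m → ℝ)) :
    ∀ R : Multiset (Fin m → ℝ),
      (∀ t, (Q.map fun u => indQ u t).sum = (R.map fun u => indQ u t).sum) → Q = R := by
  induction Q using Multiset.strongInductionOn with
  | ih Q IH =>
    intro R h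
    rcases eq_or_ne (Q + R) 0 with h0 | h0
    · have h1 : Q = 0 := Multiset.le_zero.1 (h0 ▸ Multiset.le_add_right Q R)
      have h2 : R = 0 := Multiset.le_zero.1 (h0 ▸ Multiset.le_add_left R Q)
      rw [h1, h2]
    · have hne : (Q + R).toFinset.Nonempty := by
        obtain ⟨x, hx⟩ := Multiset.exists_mem_of_ne_zero h0
        exact ⟨x, Multiset.mem_toFinset.2 hx⟩
      obtain ⟨u, hu, hmin⟩ := (Q + R).toFinset.exists_minimal hne
      have hle : ∀ v ∈ Q + R, v ≤ u → v = u := by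
        intro v hv hvu
        by_contra hne'
        exact hne' (le_antisymm hvu (hmin (Multiset.mem_toFinset.2 hv) hvu))
      have hQ : (Q.map fun v => indQ v u).sum = Q.count u := by
        rw [Multiset.map_congr rfl (fun v hv => ?_)]
        · exact sum_map_ite_eq u Q
        · unfold indQ
          by_cases hvu : v ≤ u
          · simp [hvu, hle v (Multiset.mem_add.2 (Or.inl hv)) hvu]
          · have : v ≠ u := fun e => hvu (e ▸ le_refl u)
            simp [hvu, this]
      have hR : (R.map fun v => indQ v u).sum = R.count u := by
        rw [Multiset.map_congr rfl (fun v hv => ?_)]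
        · exact sum_map_ite_eq u R
        · unfold indQ
          by_cases hvu : v ≤ u
          · simp [hvu, hle v (Multiset.mem_add.2 (Or.inr hv)) hvu]
          · have : v ≠ u := fun e => hvu (e ▸ le_refl u)
            simp [hvu, this]
      have hcount : Q.count u = R.count u := by
        have := h u; rw [hQ, hR] at this; exact_mod_cast this
      have huQ : u ∈ Q := by
        rcases Multiset.mem_add.1 (Multiset.mem_toFinset.1 hu) with h' | h'
        · exact h'
        · have : 0 < R.count u := Multiset.count_pos.2 h'
          exact Multiset.count_pos.1 (hcount ▸ this)
      have huR : u ∈ R := by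
        have : 0 < Q.count u := Multiset.count_pos.2 huQ
        exact Multiset.count_pos.1 (hcount ▸ this)
      have hQ' : Q = u ::ₘ Q.erase u := (Multiset.cons_erase huQ).symm
      have hR' : R = u ::ₘ R.erase u := (Multiset.cons_erase huR).symm
      have hrec : Q.erase u = R.erase u := by
        apply IH _ (Multiset.erase_lt.2 huQ)
        intro t
        have ht := h t
        rw [hQ', hR'] at ht
        simp only [Multiset.map_cons, Multiset.sum_cons] at ht
        exact add_left_cancel ht
      rw [hQ', hR', hrec]

noncomputable def PosM {V : Type*} {m : ℕ} (K : SimplicialCplx V)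
    (f : Finset V → (Fin m → ℝ)) : Multiset (Fin m → ℝ) :=
  (K.faces.filter fun σ => Odd σ.card).val.map f

noncomputable def NegM {V : Type*} {m : ℕ} (K : SimplicialCplx V)
    (f : Finset V → (Fin m → ℝ)) : Multiset (Fin m → ℝ) :=
  (K.faces.filter fun σ => ¬ Odd σ.card).val.map f

lemma face_sum_split {V : Type*} {m : ℕ} (K : SimplicialCplx V) (f : Finset V → (Fin m → ℝ))
    (p : (Fin m → ℝ) → Prop) :
    (∑ σ ∈ K.faces.filter (fun σ => p (f σ)), (-1 : ℤ) ^ (σ.card - 1)) =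
      ((PosM K f).map fun u => if p u then (1:ℤ) else 0).sum
      - ((NegM K f).map fun u => if p u then (1:ℤ) else 0).sum := by
  have e1 : ((PosM K f).map fun u => if p u then (1:ℤ) else 0).sum
      = ∑ σ ∈ K.faces.filter (fun σ => Odd σ.card), (if p (f σ) then (1:ℤ) else 0) := by
    rw [PosM, Multiset.map_map]; rfl
  have e2 : ((NegM K f).map fun u => if p u then (1:ℤ) else 0).sum
      = ∑ σ ∈ K.faces.filter (fun σ => ¬ Odd σ.card), (if p (f σ) then (1:ℤ) else 0) := by
    rw [NegM, Multiset.map_map]; rfl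
  rw [e1, e2, Finset.sum_filter, Finset.sum_filter, Finset.sum_filter, ← Finset.sum_sub_distrib]
  apply Finset.sum_congr rfl
  intro σ hσ
  have hcard : 1 ≤ σ.card := Finset.card_pos.2 (K.nonempty_faces σ hσ)
  by_cases ho : Odd σ.card
  · have he : Even (σ.card - 1) := Nat.Odd.sub_odd ho odd_one
    simp [ho, he.neg_one_pow]
  · have heven : Even σ.card := Nat.not_odd_iff_even.1 ho
    have hod : Odd (σ.card - 1) := Nat.Even.sub_odd hcard heven odd_one
    by_cases hp : p (f σ) <;> simp [ho, hp, hod.neg_one_pow]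

lemma isDecomp_canonical {V : Type*} {m : ℕ} (K : SimplicialCplx V)
    (f : Finset V → (Fin m → ℝ)) : IsDecomp (ECP K f) (PosM K f) (NegM K f) := by
  intro t
  have := face_sum_split K f (fun u => u ≤ t)
  simpa [ECP, indQ] using this

noncomputable def stepFn (a s : ℝ) : ℝ := if a ≤ s then 1 else 0

lemma integrable_mul_step {κ : ℝ → ℝ} (hκ : Integrable κ) (a : ℝ) :
    Integrable (fun s => κ s * stepFn a s) := by
  have : (fun s => κ s * stepFn a s) = (Set.Ici a).indicator κ := by
    funext s; by_cases h : a ≤ s <;> simp [stepFn, h, Set.indicator_apply, Set.mem_Ici]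
  rw [this]; exact hκ.indicator measurableSet_Ici

lemma integrable_mul_msum {κ : ℝ → ℝ} (hκ : Integrable κ) {α : Type*} (L : Multiset α)
    (h : α → ℝ) : Integrable (fun s => κ s * (L.map fun x => stepFn (h x) s).sum) := by
  induction L using Multiset.induction with
  | empty => simpa using integrable_zero _ _ _
  | cons a L ih =>
    have e : (fun s => κ s * ((a ::ₘ L).map fun x => stepFn (h x) s).sum)
        = fun s => κ s * stepFn (h a) s + κ s * (L.map fun x => stepFn (h x) s).sum := by
      funext s; simp [mul_add]
    rw [e]; exact (integrable_mul_step hκ (h a)).add ih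

lemma step_int_bound_le {κ : ℝ → ℝ} (hκ : Integrable κ) {E : ℝ}
    (hbd : ∀ᵐ s, ‖κ s‖ ≤ E) {a b : ℝ} (hab : a ≤ b) :
    |(∫ s, κ s * stepFn a s) - ∫ s, κ s * stepFn b s| ≤ E * |a - b| := by
  have e1 : (∫ s, κ s * stepFn a s) - ∫ s, κ s * stepFn b s
      = ∫ s, (κ s * stepFn a s - κ s * stepFn b s) :=
    (integral_sub (integrable_mul_step hκ a) (integrable_mul_step hκ b)).symm
  have e2 : (fun s => κ s * stepFn a s - κ s * stepFn b s)
      = (Set.Ico a b).indicator κ := by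
    funext s
    simp only [stepFn, Set.indicator_apply, Set.mem_Ico]
    by_cases h1 : a ≤ s <;> by_cases h2 : b ≤ s
    · simp [h1, h2, not_lt.2 h2]
    · simp [h1, h2, lt_of_not_ge h2]
    · exact absurd (hab.trans h2) h1
    · simp [h1, h2]
  have e3 : (∫ s, (κ s * stepFn a s - κ s * stepFn b s)) = ∫ s in Set.Ico a b, κ s := by
    rw [e2, integral_indicator measurableSet_Ico]
  rw [e1, e3]
  have hvol : volume (Set.Ico a b) < ⊤ := by simp [Real.volume_Ico]
  have := norm_setIntegral_le_of_norm_le_const_ae (μ := volume) hvol (ae_restrict_of_ae hbd)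
  rw [Real.norm_eq_abs] at this
  calc |∫ s in Set.Ico a b, κ s| ≤ E * (volume (Set.Ico a b)).toReal := this
    _ = E * |a - b| := by
        rw [Real.volume_Ico, ENNReal.toReal_ofReal (by linarith), abs_sub_comm,
          abs_of_nonneg (by linarith)]

lemma step_int_bound {κ : ℝ → ℝ} (hκ : Integrable κ) {E : ℝ}
    (hbd : ∀ᵐ s, ‖κ s‖ ≤ E) (a b : ℝ) :
    |(∫ s, κ s * stepFn a s) - ∫ s, κ s * stepFn b s| ≤ E * |a - b| := by
  rcases le_total a b with h | h
  · exact step_int_bound_le hκ hbd h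
  · rw [abs_sub_comm, abs_sub_comm a b]
    exact step_int_bound_le hκ hbd h

lemma pairs_bound {κ : ℝ → ℝ} (hκ : Integrable κ) {E : ℝ}
    (hbd : ∀ᵐ s, ‖κ s‖ ≤ E) (pr : Multiset (ℝ × ℝ)) :
    |(∫ s, κ s * ((pr.map fun ab => stepFn ab.1 s).sum)) -
     (∫ s, κ s * ((pr.map fun ab => stepFn ab.2 s).sum))|
      ≤ E * (pr.map fun ab => |ab.1 - ab.2|).sum := by
  induction pr using Multiset.induction with
  | empty => simp
  | cons p pr ih =>
    have hm1 : Integrable (fun s => κ s * ((pr.map fun ab => stepFn ab.1 s).sum)) := by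
      have := integrable_mul_msum hκ pr (fun ab => ab.1)
      simpa using this
    have hm2 : Integrable (fun s => κ s * ((pr.map fun ab => stepFn ab.2 s).sum)) := by
      have := integrable_mul_msum hκ pr (fun ab => ab.2)
      simpa using this
    have e1 : (∫ s, κ s * (((p ::ₘ pr).map fun ab => stepFn ab.1 s).sum))
        = (∫ s, κ s * stepFn p.1 s) + ∫ s, κ s * ((pr.map fun ab => stepFn ab.1 s).sum) := by
      rw [← integral_add (integrable_mul_step hκ _) hm1]
      congr 1; funext s; simp [mul_add]
    have e2 : (∫ s, κ s * (((p ::ₘ pr).map fun ab => stepFn ab.2 s).sum))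
        = (∫ s, κ s * stepFn p.2 s) + ∫ s, κ s * ((pr.map fun ab => stepFn ab.2 s).sum) := by
      rw [← integral_add (integrable_mul_step hκ _) hm2]
      congr 1; funext s; simp [mul_add]
    rw [e1, e2, Multiset.map_cons, Multiset.sum_cons, mul_add]
    calc |(∫ s, κ s * stepFn p.1 s) + (∫ s, κ s * ((pr.map fun ab => stepFn ab.1 s).sum))
            - ((∫ s, κ s * stepFn p.2 s) + ∫ s, κ s * ((pr.map fun ab => stepFn ab.2 s).sum))|
        ≤ |(∫ s, κ s * stepFn p.1 s) - ∫ s, κ s * stepFn p.2 s|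
          + |(∫ s, κ s * ((pr.map fun ab => stepFn ab.1 s).sum))
            - ∫ s, κ s * ((pr.map fun ab => stepFn ab.2 s).sum)| := by
          rw [add_sub_add_comm]; exact abs_add_le _ _
      _ ≤ E * |p.1 - p.2| + E * (pr.map fun ab => |ab.1 - ab.2|).sum :=
          add_le_add (step_int_bound hκ hbd p.1 p.2) ih


lemma decomp_eq {V : Type*} {m : ℕ} (K : SimplicialCplx V) (f : Finset V → (Fin m → ℝ))
    {P N : Multiset (Fin m → ℝ)} (h : IsDecomp (ECP K f) P N) :
    P + NegM K f = N + PosM K f := by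
  apply multiset_cancel
  intro t
  have h1 := h t
  have h2 := isDecomp_canonical K f t
  simp only [Multiset.map_add, Multiset.sum_add]
  omega

lemma key_sum {V : Type*} {m : ℕ} (K : SimplicialCplx V) (f : Finset V → (Fin m → ℝ))
    {P N : Multiset (Fin m → ℝ)} (h : IsDecomp (ECP K f) P N) (p : (Fin m → ℝ) → Prop) :
    (∑ σ ∈ K.faces.filter (fun σ => p (f σ)), (-1 : ℤ) ^ (σ.card - 1)) =
      (P.map fun u => if p u then (1:ℤ) else 0).sum
      - (N.map fun u => if p u then (1:ℤ) else 0).sum := by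
  have hsplit := face_sum_split K f p
  have he : ((P + NegM K f).map fun u => if p u then (1:ℤ) else 0).sum
      = ((N + PosM K f).map fun u => if p u then (1:ℤ) else 0).sum := by
    rw [decomp_eq K f h]
  simp only [Multiset.map_add, Multiset.sum_add] at he
  omega

lemma cast_sum_ite {α : Type*} (L : Multiset α) (c : α → Prop) :
    (((L.map fun u => if c u then (1:ℤ) else 0).sum : ℤ) : ℝ)
      = (L.map fun u => if c u then (1:ℝ) else 0).sum := by
  induction L using Multiset.induction with
  | empty => simp
  | cons a L ih =>
    simp only [Multiset.map_cons, Multiset.sum_cons, Int.cast_add, ih]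
    by_cases h : c a <;> simp [h]

lemma HT_eq {V : Type*} {m : ℕ} (K : SimplicialCplx V) (f : Finset V → (Fin m → ℝ))
    (κ : ℝ → ℝ) (hκ : Integrable κ) {P N : Multiset (Fin m → ℝ)}
    (h : IsDecomp (ECP K f) P N) (ξ : Fin m → ℝ) :
    HT K f κ ξ = (∫ s, κ s * (P.map fun u => stepFn (∑ i, ξ i * u i) s).sum)
               - (∫ s, κ s * (N.map fun u => stepFn (∑ i, ξ i * u i) s).sum) := by
  unfold HT
  rw [← integral_sub (integrable_mul_msum hκ P _) (integrable_mul_msum hκ N _)]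
  congr 1; funext s
  rw [← mul_sub]
  congr 1
  rw [key_sum K f h (fun u => (∑ i, ξ i * u i) ≤ s)]
  rw [Int.cast_sub, cast_sum_ite, cast_sum_ite]
  rfl

/-- Let `𝒦` be a compact subset of the cone of linear forms on `ℝ^m`
with nonnegative canonical coordinates, and `q ∈ [1, ∞]`. There is a constant `C ≥ 0`,
depending only on `𝒦` and `q`, such that for every `κ ∈ L¹(ℝ) ∩ L^∞(ℝ)`, every pair of
finite simplicial complexes `K, K'` and non-decreasing `f : K → ℝ^m`, `g : K' → ℝ^m`,
`‖HT_f^κ − HT_g^κ‖_{L^q(𝒦)} ≤ C ⬝ ‖κ‖_∞ ⬝ d(ECP_f, ECP_g)` in `[0, +∞]`. -/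
theorem stmt8 (m : ℕ) (𝒦 : Set (Fin m → ℝ)) (h𝒦c : IsCompact 𝒦)
    (h𝒦 : ∀ ξ ∈ 𝒦, ∀ i, 0 ≤ ξ i) (q : ℝ≥0∞) (hq : 1 ≤ q) :
    ∃ C : ℝ≥0, ∀ (κ : ℝ → ℝ), Integrable κ → MemLp κ ⊤ →
      ∀ (V V' : Type) (K : SimplicialCplx V) (K' : SimplicialCplx V')
        (f : Finset V → (Fin m → ℝ)) (g : Finset V' → (Fin m → ℝ)),
        (∀ σ ∈ K.faces, ∀ τ ∈ K.faces, σ ⊆ τ → f σ ≤ f τ) →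
        (∀ σ ∈ K'.faces, ∀ τ ∈ K'.faces, σ ⊆ τ → g σ ≤ g τ) →
        eLpNorm (fun ξ => HT K f κ ξ - HT K' g κ ξ) q (volume.restrict 𝒦)
          ≤ (C : ℝ≥0∞) * eLpNorm κ ⊤ volume * signedW1Dist (ECP K f) (ECP K' g) := by
  obtain ⟨R, hR⟩ := isBounded_iff_forall_norm_le.1 h𝒦c.isBounded
  set M : ℝ := max R 1 with hM
  have hM1 : (1:ℝ) ≤ M := le_max_right _ _
  have hM0 : (0:ℝ) ≤ M := le_trans zero_le_one hM1
  have hξbound : ∀ ξ ∈ 𝒦, ∀ i, |ξ i| ≤ M := fun ξ hξ i =>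
    le_trans (le_trans (norm_le_pi_norm ξ i) (hR ξ hξ)) (le_max_left _ _)
  have hvol : volume 𝒦 < ⊤ := h𝒦c.measure_lt_top
  set Vb : ℝ≥0∞ := max 1 (volume 𝒦) with hVb
  have hVbne : Vb ≠ ⊤ := by
    simp only [hVb, ne_eq, max_eq_top, not_or]
    exact ⟨ENNReal.one_ne_top, hvol.ne⟩
  refine ⟨Vb.toNNReal * Real.toNNReal M, ?_⟩
  intro κ hκ hkinf V V' K K' f g hf hg
  set E := eLpNorm κ ⊤ volume with hE
  have hEne : E ≠ ⊤ := hkinf.2.ne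
  by_cases hE0 : E = 0
  · have hκ0 : κ =ᵐ[volume] 0 := by
      rw [hE, eLpNorm_eq_zero_iff hkinf.1 (by simp)] at hE0
      exact hE0
    have hHT : ∀ (W : Type) (L : SimplicialCplx W) (h : Finset W → (Fin m → ℝ))
        (ξ : Fin m → ℝ), HT L h κ ξ = 0 := by
      intro W L h ξ
      unfold HT
      rw [integral_congr_ae (g := fun _ => (0:ℝ)) ?_, integral_zero]
      filter_upwards [hκ0] with s hs
      simp [hs]
    have hz : (fun ξ => HT K f κ ξ - HT K' g κ ξ) = fun _ => (0:ℝ) := by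
      funext ξ; rw [hHT, hHT, sub_zero]
    rw [hz, eLpNorm_zero']
    exact zero_le
  · set k : ℝ≥0∞ := ((Vb.toNNReal * Real.toNNReal M : ℝ≥0) : ℝ≥0∞) * E with hk
    have hVbnn0 : Vb.toNNReal ≠ 0 := by
      rw [ne_eq, ENNReal.toNNReal_eq_zero_iff, not_or]
      constructor
      · intro h0
        have : (1:ℝ≥0∞) ≤ Vb := le_max_left _ _
        rw [h0] at this
        exact (not_le.2 zero_lt_one) this
      · exact hVbne
    have hMnn0 : Real.toNNReal M ≠ 0 := by
      rw [ne_eq, Real.toNNReal_eq_zero, not_le]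
      linarith
    have hkne0 : k ≠ 0 := by
      apply mul_ne_zero _ hE0
      simp only [ne_eq, ENNReal.coe_eq_zero]
      exact mul_ne_zero hVbnn0 hMnn0
    have hknetop : k ≠ ⊤ := ENNReal.mul_ne_top ENNReal.coe_ne_top hEne
    have hbd : ∀ᵐ s, ‖κ s‖ ≤ E.toReal := by
      filter_upwards [ae_le_eLpNormEssSup (f := κ) (μ := volume)] with s hs
      have h1 : (‖κ s‖₊ : ℝ≥0∞) ≤ E := by
        rw [hE, eLpNorm_exponent_top]; exact_mod_cast hs
      have h2 := ENNReal.toReal_mono hEne h1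
      simpa using h2
    have hstep : ∀ c ∈ {c : ℝ≥0∞ | ∃ (P N P' N' : Multiset (Fin m → ℝ))
        (pr : Multiset ((Fin m → ℝ) × (Fin m → ℝ))),
        IsDecomp (ECP K f) P N ∧ IsDecomp (ECP K' g) P' N' ∧
        pr.map Prod.fst = P + N' ∧ pr.map Prod.snd = N + P' ∧
        c = ENNReal.ofReal ((pr.map fun uv => l1 uv.1 uv.2).sum)},
        eLpNorm (fun ξ => HT K f κ ξ - HT K' g κ ξ) q (volume.restrict 𝒦) ≤ k * c := by
      rintro c ⟨P, N, P', N', pr, hPN, hPN', hfst, hsnd, rfl⟩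
      set cost : ℝ := (pr.map fun uv => l1 uv.1 uv.2).sum with hcost
      have hpt : ∀ ξ ∈ 𝒦, ‖HT K f κ ξ - HT K' g κ ξ‖ ≤ E.toReal * (M * cost) := by
        intro ξ hξ
        set dot : (Fin m → ℝ) → ℝ := fun u => ∑ i, ξ i * u i with hdot
        have e1 : HT K f κ ξ - HT K' g κ ξ
            = (∫ s, κ s * ((pr.map fun uv => stepFn (dot uv.1) s).sum))
              - ∫ s, κ s * ((pr.map fun uv => stepFn (dot uv.2) s).sum) := by
          rw [HT_eq K f κ hκ hPN ξ, HT_eq K' g κ hκ hPN' ξ]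
          have efst : (∫ s, κ s * ((pr.map fun uv => stepFn (dot uv.1) s).sum))
              = (∫ s, κ s * (P.map fun u => stepFn (dot u) s).sum)
                + ∫ s, κ s * (N'.map fun u => stepFn (dot u) s).sum := by
            rw [← integral_add (integrable_mul_msum hκ P _) (integrable_mul_msum hκ N' _)]
            apply integral_congr_ae
            apply Filter.Eventually.of_forall
            intro s
            have e : (pr.map fun uv => stepFn (dot uv.1) s)
                = ((P + N').map fun u => stepFn (dot u) s) := by
              rw [← hfst, Multiset.map_map]; rfl
            dsimp only
            rw [e, Multiset.map_add, Multiset.sum_add, mul_add]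
          have esnd : (∫ s, κ s * ((pr.map fun uv => stepFn (dot uv.2) s).sum))
              = (∫ s, κ s * (N.map fun u => stepFn (dot u) s).sum)
                + ∫ s, κ s * (P'.map fun u => stepFn (dot u) s).sum := by
            rw [← integral_add (integrable_mul_msum hκ N _) (integrable_mul_msum hκ P' _)]
            apply integral_congr_ae
            apply Filter.Eventually.of_forall
            intro s
            have e : (pr.map fun uv => stepFn (dot uv.2) s)
                = ((N + P').map fun u => stepFn (dot u) s) := by
              rw [← hsnd, Multiset.map_map]; rfl
            dsimp only
            rw [e, Multiset.map_add, Multiset.sum_add, mul_add]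
          rw [efst, esnd]
          ring
        have hb := pairs_bound hκ hbd (pr.map fun uv => (dot uv.1, dot uv.2))
        simp only [Multiset.map_map, Function.comp] at hb
        rw [Real.norm_eq_abs, e1]
        refine hb.trans ?_
        have hsum : (pr.map fun uv => |dot uv.1 - dot uv.2|).sum ≤ M * cost := by
          have h1 : (pr.map fun uv => |dot uv.1 - dot uv.2|).sum
              ≤ (pr.map fun uv => M * l1 uv.1 uv.2).sum := by
            apply Multiset.sum_map_le_sum_map
            intro uv _
            have e2 : dot uv.1 - dot uv.2 = ∑ i, ξ i * (uv.1 i - uv.2 i) := by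
              rw [hdot]
              simp only [mul_sub]
              rw [Finset.sum_sub_distrib]
            rw [e2]
            calc |∑ i, ξ i * (uv.1 i - uv.2 i)| ≤ ∑ i, |ξ i * (uv.1 i - uv.2 i)| :=
                  Finset.abs_sum_le_sum_abs _ _
              _ ≤ ∑ i, M * |uv.1 i - uv.2 i| := by
                  apply Finset.sum_le_sum
                  intro i _
                  rw [abs_mul]
                  exact mul_le_mul_of_nonneg_right (hξbound ξ hξ i) (abs_nonneg _)
              _ = M * l1 uv.1 uv.2 := by rw [l1, Finset.mul_sum]
          calc (pr.map fun uv => |dot uv.1 - dot uv.2|).sum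
              ≤ (pr.map fun uv => M * l1 uv.1 uv.2).sum := h1
            _ = M * cost := by rw [hcost, Multiset.sum_map_mul_left]
        exact mul_le_mul_of_nonneg_left hsum ENNReal.toReal_nonneg
      have hae : ∀ᵐ ξ ∂(volume.restrict 𝒦), ‖HT K f κ ξ - HT K' g κ ξ‖
          ≤ E.toReal * (M * cost) :=
        ae_restrict_of_forall_mem h𝒦c.isClosed.measurableSet hpt
      have hbound := eLpNorm_le_of_ae_bound (p := q) hae
      rw [Measure.restrict_apply_univ] at hbound
      refine hbound.trans ?_
      have hq0 : (0:ℝ) ≤ q.toReal⁻¹ := inv_nonneg.2 ENNReal.toReal_nonneg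
      have hpow : (volume 𝒦) ^ q.toReal⁻¹ ≤ Vb := by
        rcases le_total (volume 𝒦) 1 with h1 | h1
        · exact le_trans (ENNReal.rpow_le_one h1 hq0) (le_max_left _ _)
        · have hle1 : q.toReal⁻¹ ≤ 1 := by
            rcases eq_or_ne q ⊤ with rfl | hqt
            · simp
            · have h1q : (1:ℝ) ≤ q.toReal := by
                have := ENNReal.toReal_mono hqt hq
                simpa using this
              exact inv_le_one_of_one_le₀ h1q
          calc (volume 𝒦) ^ q.toReal⁻¹ ≤ (volume 𝒦) ^ (1:ℝ) :=
                ENNReal.rpow_le_rpow_of_exponent_le h1 hle1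
            _ = volume 𝒦 := ENNReal.rpow_one _
            _ ≤ Vb := le_max_right _ _
      have hcost0 : (0:ℝ) ≤ cost := by
        rw [hcost]
        apply Multiset.sum_nonneg
        intro x hx
        obtain ⟨uv, _, rfl⟩ := Multiset.mem_map.1 hx
        apply Finset.sum_nonneg
        intro i _
        exact abs_nonneg _
      have hofreal : ENNReal.ofReal (E.toReal * (M * cost))
          = E * (ENNReal.ofReal M * ENNReal.ofReal cost) := by
        rw [ENNReal.ofReal_mul ENNReal.toReal_nonneg, ENNReal.ofReal_toReal hEne,
          ENNReal.ofReal_mul hM0]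
      have hcoe : ((Vb.toNNReal * Real.toNNReal M : ℝ≥0) : ℝ≥0∞)
          = Vb * ENNReal.ofReal M := by
        rw [ENNReal.coe_mul, ENNReal.coe_toNNReal hVbne]
        rfl
      calc volume 𝒦 ^ q.toReal⁻¹ * ENNReal.ofReal (E.toReal * (M * cost))
          ≤ Vb * ENNReal.ofReal (E.toReal * (M * cost)) := mul_le_mul_left hpow _
        _ = k * ENNReal.ofReal cost := by rw [hofreal, hk, hcoe]; ring
    have hdiv : eLpNorm (fun ξ => HT K f κ ξ - HT K' g κ ξ) q (volume.restrict 𝒦) / k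
        ≤ signedW1Dist (ECP K f) (ECP K' g) := by
      apply le_sInf
      intro c hc
      exact ENNReal.div_le_of_le_mul' (hstep c hc)
    calc eLpNorm (fun ξ => HT K f κ ξ - HT K' g κ ξ) q (volume.restrict 𝒦)
        = k * (eLpNorm (fun ξ => HT K f κ ξ - HT K' g κ ξ) q (volume.restrict 𝒦) / k) :=
          (ENNReal.mul_div_cancel hkne0 hknetop).symm
      _ ≤ k * signedW1Dist (ECP K f) (ECP K' g) := mul_le_mul_right hdiv k
      _ = ((Vb.toNNReal * Real.toNNReal M : ℝ≥0) : ℝ≥0∞) * E * signedW1Dist (ECP K f) (ECP K' g) := by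
          rw [hk]
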